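/- (Theorem 1, HOCBF forward invariance, trajectory form.) Let m ≥ 1, and for i = 1,…,m let αᵢ : ℝ → ℝ be an extended class K function (strictly increasing with αᵢ(0) = 0), where αᵢ is additionally (m−i)-times continuously differentiable for i ≤ m−1. Let ψ₀ : ℝ → ℝ be m-times differentiable, and define inductively ψᵢ(t) = ψᵢ₋₁'(t) + αᵢ(ψᵢ₋₁(t)) for i = 1,…,m. If ψᵢ(0) ≥ 0 for every i = 0,…,m−1 and ψₘ(t) ≥ 0 for all t ≥ 0, then ψᵢ(t) ≥ 0 for every i = 0,…,m−1 and all t ≥ 0; in particular ψ₀(t) ≥ 0 for all t ≥ 0, i.e., the set C₁ ∩ … ∩ Cₘ where Cᵢ = {ψᵢ₋₁ ≥ 0} is forward invariant along the trajectory. -/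

import Mathlib

/-- `f` is `n`-times differentiable. -/
def Dn (n : ℕ) (f : ℝ → ℝ) : Prop := ∀ k < n, Differentiable ℝ (deriv^[k] f)

lemma Dn_mono {n k : ℕ} {f : ℝ → ℝ} (h : Dn n f) (hk : k ≤ n) : Dn k f :=
  fun j hj => h j (lt_of_lt_of_le hj hk)

lemma Dn_succ_iff {n : ℕ} {f : ℝ → ℝ} :
    Dn (n + 1) f ↔ Differentiable ℝ f ∧ Dn n (deriv f) := by
  constructor
  · intro h
    refine ⟨h 0 (Nat.succ_pos n), fun k hk => ?_⟩
    have := h (k + 1) (by omega)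
    rwa [Function.iterate_succ_apply] at this
  · rintro ⟨h0, h⟩ k hk
    cases k with
    | zero => exact h0
    | succ k => rw [Function.iterate_succ_apply]; exact h k (by omega)

lemma Dn_add {n : ℕ} {f g : ℝ → ℝ} (hf : Dn n f) (hg : Dn n g) : Dn n (f + g) := by
  induction n generalizing f g with
  | zero => intro k hk; omega
  | succ n ih =>
    rw [Dn_succ_iff] at hf hg ⊢
    refine ⟨hf.1.add hg.1, ?_⟩
    have : deriv (f + g) = deriv f + deriv g := by
      funext x
      exact deriv_add (hf.1 x) (hg.1 x)
    rw [this]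
    exact ih hf.2 hg.2

lemma Dn_mul {n : ℕ} {f g : ℝ → ℝ} (hf : Dn n f) (hg : Dn n g) : Dn n (f * g) := by
  induction n generalizing f g with
  | zero => intro k hk; omega
  | succ n ih =>
    rw [Dn_succ_iff] at hf hg ⊢
    refine ⟨hf.1.mul hg.1, ?_⟩
    have : deriv (f * g) = deriv f * g + f * deriv g := by
      funext x
      exact deriv_mul (hf.1 x) (hg.1 x)
    rw [this]
    exact Dn_add (ih hf.2 (Dn_mono (Dn_succ_iff.mpr hg) (Nat.le_succ n)))
      (ih (Dn_mono (Dn_succ_iff.mpr hf) (Nat.le_succ n)) hg.2)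

lemma Dn_comp {n : ℕ} {g f : ℝ → ℝ} (hg : ContDiff ℝ (n : ℕ∞) g) (hf : Dn n f) :
    Dn n (g ∘ f) := by
  induction n generalizing g f with
  | zero => intro k hk; omega
  | succ n ih =>
    rw [Dn_succ_iff] at hf ⊢
    have hgd : Differentiable ℝ g := hg.differentiable (by simp)
    refine ⟨hgd.comp hf.1, ?_⟩
    have : deriv (g ∘ f) = (deriv g ∘ f) * deriv f := by
      funext x
      exact deriv_comp x (hgd (f x)) (hf.1 x)
    rw [this]
    have hg' : ContDiff ℝ (n : ℕ∞) (deriv g) := by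
      have := (contDiff_succ_iff_deriv (n := n)).mp (by exact_mod_cast hg)
      exact this.2.2
    have hfn : Dn n f := Dn_mono (Dn_succ_iff.mpr hf) (Nat.le_succ n)
    exact Dn_mul (ih hg' hfn) hf.2

/-- Comparison lemma: if `f' + a ∘ f ≥ 0` on `[0,∞)` with `a` strictly increasing,
`a 0 = 0` and `f 0 ≥ 0`, then `f ≥ 0` on `[0,∞)`. -/
lemma comparison {f a : ℝ → ℝ} (hf : Differentiable ℝ f)
    (ha_mono : StrictMono a) (ha0 : a 0 = 0) (h0 : 0 ≤ f 0)
    (h : ∀ t, 0 ≤ t → 0 ≤ deriv f t + a (f t)) :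
    ∀ t, 0 ≤ t → 0 ≤ f t := by
  by_contra hcon
  push_neg at hcon
  obtain ⟨t₀, ht₀, hft₀⟩ := hcon
  have ht₀pos : 0 < t₀ := by
    rcases lt_or_eq_of_le ht₀ with h' | h'
    · exact h'
    · exfalso; rw [← h'] at hft₀; linarith
  let S : Set ℝ := {t | t ∈ Set.Icc 0 t₀ ∧ 0 ≤ f t}
  have hSne : S.Nonempty := ⟨0, ⟨le_refl 0, le_of_lt ht₀pos⟩, h0⟩
  have hSbdd : BddAbove S := ⟨t₀, fun x hx => hx.1.2⟩
  have hSclosed : IsClosed S := by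
    have : S = Set.Icc 0 t₀ ∩ f ⁻¹' Set.Ici 0 := by
      ext x; simp [S, Set.mem_Ici, and_comm]
    rw [this]
    exact isClosed_Icc.inter (isClosed_Ici.preimage hf.continuous)
  set s := sSup S with hs
  have hsS : s ∈ S := hSclosed.csSup_mem hSne hSbdd
  have hfs : 0 ≤ f s := hsS.2
  have hs0 : 0 ≤ s := hsS.1.1
  have hst₀ : s < t₀ := lt_of_le_of_ne hsS.1.2 (by intro h; rw [h] at hfs; linarith)
  have hneg : ∀ t ∈ Set.Ioc s t₀, f t < 0 := by
    intro t ht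
    by_contra hge
    push_neg at hge
    have : t ∈ S := ⟨⟨le_trans hs0 ht.1.le, ht.2⟩, hge⟩
    have := le_csSup hSbdd this
    linarith [ht.1]
  have hsm : StrictMonoOn f (Set.Icc s t₀) := by
    apply strictMonoOn_of_deriv_pos (convex_Icc s t₀) hf.continuous.continuousOn
    intro t ht
    rw [interior_Icc] at ht
    have hft : f t < 0 := hneg t ⟨ht.1, ht.2.le⟩
    have haft : a (f t) < 0 := by
      have := ha_mono hft
      rwa [ha0] at this
    have := h t (le_trans hs0 ht.1.le)
    linarith
  have := hsm ⟨le_refl s, hst₀.le⟩ ⟨hst₀.le, le_refl t₀⟩ hst₀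
  linarith

/-- Theorem 1 (HOCBF forward invariance, trajectory form).
`ψ 0` is `m`-times differentiable, `ψ i = ψ (i-1)' + αᵢ ∘ ψ (i-1)` for `i = 1,…,m`,
where each `αᵢ` is an extended class K function (strictly increasing, vanishing at 0),
`(m-i)`-times continuously differentiable for `i ≤ m-1`.
If `ψ i 0 ≥ 0` for all `i < m` and `ψ m t ≥ 0` for all `t ≥ 0`,
then `ψ i t ≥ 0` for all `i < m` and all `t ≥ 0`. -/
theorem hocbf_forward_invariance
    (m : ℕ) (hm : 1 ≤ m)
    (α : ℕ → ℝ → ℝ)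
    (hα_mono : ∀ i, 1 ≤ i → i ≤ m → StrictMono (α i))
    (hα_zero : ∀ i, 1 ≤ i → i ≤ m → α i 0 = 0)
    (hα_smooth : ∀ i, 1 ≤ i → i ≤ m - 1 → ContDiff ℝ ((m - i : ℕ) : ℕ∞) (α i))
    (ψ : ℕ → ℝ → ℝ)
    (hψ0_diff : ∀ k < m, Differentiable ℝ (deriv^[k] (ψ 0)))
    (hψ_def : ∀ i, 1 ≤ i → i ≤ m →
      ∀ t : ℝ, ψ i t = deriv (ψ (i - 1)) t + α i (ψ (i - 1) t))
    (hinit : ∀ i < m, ψ i 0 ≥ 0)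
    (hconstr : ∀ t : ℝ, 0 ≤ t → ψ m t ≥ 0) :
    ∀ i < m, ∀ t : ℝ, 0 ≤ t → ψ i t ≥ 0 := by
  -- Step 1: smoothness: ψ i is (m - i)-times differentiable for i < m.
  have hsmooth : ∀ i < m, Dn (m - i) (ψ i) := by
    intro i
    induction i with
    | zero => intro _; exact hψ0_diff
    | succ i ih =>
      intro hi1
      have hi : i < m := by omega
      have hψi := ih hi
      have heq : ψ (i + 1) = deriv (ψ i) + fun t => α (i + 1) (ψ i t) := by
        funext t
        simpa using hψ_def (i + 1) (by omega) (by omega) t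
      rw [heq]
      have h1 : Dn (m - (i + 1)) (deriv (ψ i)) := by
        have : Dn (m - i) (ψ i) := hψi
        have := (Dn_succ_iff (n := m - i - 1) (f := ψ i)).mp (by
          have : m - i - 1 + 1 = m - i := by omega
          rwa [this])
        have h2 := this.2
        have : m - (i + 1) = m - i - 1 := by omega
        rwa [this]
      have h2 : Dn (m - (i + 1)) (fun t => α (i + 1) (ψ i t)) := by
        have hα : ContDiff ℝ ((m - (i + 1) : ℕ) : ℕ∞) (α (i + 1)) :=
          hα_smooth (i + 1) (by omega) (by omega)
        exact Dn_comp hα (Dn_mono hψi (by omega))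
      exact Dn_add h1 h2
  have hdiff : ∀ i < m, Differentiable ℝ (ψ i) := by
    intro i hi
    have := hsmooth i hi 0 (by omega)
    simpa using this
  -- Step 2: downward induction.
  have claim : ∀ j ≤ m, ∀ t : ℝ, 0 ≤ t → 0 ≤ ψ (m - j) t := by
    intro j
    induction j with
    | zero => intro _ t ht; simpa using hconstr t ht
    | succ j ih =>
      intro hj t ht
      set i := m - (j + 1) with hi
      have him : i < m := by omega
      have hsucc : i + 1 = m - j := by omega
      refine comparison (hdiff i him) (hα_mono (i + 1) (by omega) (by omega))
        (hα_zero (i + 1) (by omega) (by omega)) (hinit i him) ?_ t ht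
      intro u hu
      have := hψ_def (i + 1) (by omega) (by omega) u
      simp only [Nat.add_sub_cancel] at this
      rw [← this, hsucc]
      exact ih (by omega) u hu
  intro i hi t ht
  have := claim (m - i) (by omega) t ht
  have h : m - (m - i) = i := by omega
  rwa [h] at this
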